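/- Let G be a finite simple bipartite graph with nonempty partite sets U and W. Then M(G) ≤ λmax(G) ≤ √(((1/4)·log|U| + 1)·((1/4)·log|W| + 1))·M(G). -/

import Mathlib

-- `lamMax G`: the largest eigenvalue of the adjacency matrix of `G`.
open Classical in
noncomputable def lamMax {V : Type*} [Fintype V] (G : SimpleGraph V) : ℝ :=
  sSup (spectrum ℝ (G.adjMatrix ℝ))

-- `eXY G X Y = e(X,Y)`: the number of ordered pairs `(x,y) ∈ X × Y` with `x` adjacent to `y`.
open Classical in
noncomputable def eXY {V : Type*} (G : SimpleGraph V) (X Y : Finset V) : ℕ :=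
  ((X ×ˢ Y).filter fun p => G.Adj p.1 p.2).card

/-- `M(G)`: the maximum of `e(X,Y)/√(|X||Y|)` over nonempty `X, Y ⊆ V`. -/
noncomputable def MG {V : Type*} (G : SimpleGraph V) : ℝ :=
  sSup {r : ℝ | ∃ X Y : Finset V, X.Nonempty ∧ Y.Nonempty ∧
    r = (eXY G X Y : ℝ) / Real.sqrt ((X.card : ℝ) * (Y.card : ℝ))}

set_option linter.unusedSectionVars false
set_option maxHeartbeats 1000000

open Finset Matrix


lemma aux_log_lb {x : ℝ} (hx : 1 ≤ x) : 2*(x-1)/(x+1) ≤ Real.log x := by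
  have key : ∀ y : ℝ, 1 ≤ y →
      HasDerivAt (fun z : ℝ => Real.log z + 4/(z+1) - 2) (1/y - 4/(y+1)^2) y := by
    intro y hy
    have hy0 : y ≠ 0 := by linarith
    have hy1 : y + 1 ≠ 0 := by linarith
    have h1 : HasDerivAt Real.log (1/y) y := by
      simpa [one_div] using Real.hasDerivAt_log hy0
    have h2 : HasDerivAt (fun z : ℝ => z + 1) 1 y := (hasDerivAt_id y).add_const 1
    have h3 : HasDerivAt (fun z : ℝ => 4/(z+1)) ((0*(y+1) - 4*1)/(y+1)^2) y :=
      (hasDerivAt_const y (4:ℝ)).div h2 hy1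
    have := (h1.add h3).sub_const 2
    exact this.congr_deriv (by ring)
  have mono : MonotoneOn (fun z : ℝ => Real.log z + 4/(z+1) - 2) (Set.Ici 1) := by
    apply monotoneOn_of_deriv_nonneg (convex_Ici 1)
    · intro y hy
      exact (key y hy).continuousAt.continuousWithinAt
    · intro y hy
      rw [interior_Ici] at hy
      exact (key y (le_of_lt hy)).differentiableAt.differentiableWithinAt
    · intro y hy
      rw [interior_Ici] at hy
      have hy1 : (1:ℝ) ≤ y := le_of_lt hy
      rw [(key y hy1).deriv]
      have hy0 : (0:ℝ) < y := by linarith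
      have hy2 : (0:ℝ) < (y+1)^2 := by positivity
      rw [sub_nonneg, div_le_div_iff₀ hy2 hy0]
      nlinarith
  have h0 : (fun z : ℝ => Real.log z + 4/(z+1) - 2) 1 ≤
      (fun z : ℝ => Real.log z + 4/(z+1) - 2) x :=
    mono (Set.mem_Ici.2 le_rfl) (Set.mem_Ici.2 hx) hx
  simp only [Real.log_one] at h0
  have hx1 : x + 1 ≠ 0 := by linarith
  have hrw : 2*(x-1)/(x+1) = 2 - 4/(x+1) := by field_simp; ring
  rw [hrw]
  norm_num at h0
  linarith

lemma aux_sqrt_step {b : ℝ} (hb : 1 ≤ b) :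
    (Real.sqrt (b+1) - Real.sqrt b)^2 ≤ (1/4) * (Real.log (b+1) - Real.log b) := by
  have hb0 : (0:ℝ) < b := by linarith
  have hsb : 0 < Real.sqrt b := Real.sqrt_pos.2 hb0
  have hsb1 : 0 < Real.sqrt (b+1) := Real.sqrt_pos.2 (by linarith)
  set x : ℝ := Real.sqrt (b+1) / Real.sqrt b with hxdef
  have hx1 : 1 ≤ x := by
    rw [hxdef, le_div_iff₀ hsb]
    simpa using Real.sqrt_le_sqrt (by linarith : b ≤ b + 1)
  have hxsq : x^2 = (b+1)/b := by
    rw [hxdef, div_pow, Real.sq_sqrt (by linarith : (0:ℝ) ≤ b+1), Real.sq_sqrt hb0.le]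
  have hlog : Real.log (b+1) - Real.log b = 2 * Real.log x := by
    rw [← Real.log_div (by linarith) hb0.ne', ← hxsq, Real.log_pow]
    push_cast; ring
  have hxx : Real.sqrt (b+1) = Real.sqrt b * x := by
    rw [hxdef]; field_simp
  have hlhs : (Real.sqrt (b+1) - Real.sqrt b)^2 = b * (x-1)^2 := by
    rw [hxx]
    have : Real.sqrt b * x - Real.sqrt b = Real.sqrt b * (x - 1) := by ring
    rw [this, mul_pow, Real.sq_sqrt hb0.le]
  have hprod : (x-1)*(x+1) = 1/b := by
    have : (x-1)*(x+1) = x^2 - 1 := by ring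
    rw [this, hxsq]; field_simp; ring
  have hxp1 : (0:ℝ) < x + 1 := by linarith
  have heq : b * (x-1)^2 = (x-1)/(x+1) := by
    rw [eq_div_iff hxp1.ne']
    calc b * (x-1)^2 * (x+1) = (b * (x-1)) * ((x-1)*(x+1)) := by ring
      _ = (b * (x-1)) * (1/b) := by rw [hprod]
      _ = x - 1 := by field_simp
  have hkey := aux_log_lb hx1
  rw [hlhs, heq, hlog]
  have : (x-1)/(x+1) = (2*(x-1)/(x+1))/2 := by ring
  rw [this]
  linarith

lemma aux_sqrt_sum {m : ℕ} (hm : 1 ≤ m) :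
    ∑ i ∈ Finset.range m, (Real.sqrt (i+1) - Real.sqrt i)^2
      ≤ (1/4) * Real.log m + 1 := by
  induction m with
  | zero => omega
  | succ n ih =>
    rcases Nat.eq_or_lt_of_le hm with h1 | h1
    · rw [← h1]
      norm_num
    · have hn : 1 ≤ n := by omega
      rw [Finset.sum_range_succ]
      have hstep : (Real.sqrt (n+1) - Real.sqrt n)^2
          ≤ (1/4) * (Real.log (n+1) - Real.log n) := by
        have := aux_sqrt_step (b := (n:ℝ)) (by exact_mod_cast hn)
        exact_mod_cast this
      have := ih hn
      push_cast
      push_cast at this hstep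
      linarith

lemma aux_telescope (F : ℕ → ℝ) : ∀ {k m : ℕ}, k ≤ m →
    ∑ i ∈ Finset.Ico k m, (F i - F (i+1)) = F k - F m := by
  intro k m
  induction m with
  | zero => intro h; interval_cases k; simp
  | succ n ih =>
    intro h
    rcases Nat.eq_or_lt_of_le h with h1 | h1
    · rw [h1]; simp
    · have hk : k ≤ n := by omega
      rw [Finset.sum_Ico_succ_top hk, ih hk]
      ring

lemma aux_abel (F : ℕ → ℝ) (m : ℕ) (hFm : F m = 0) :
    ∑ i ∈ Finset.range m, (F i - F (i+1)) * Real.sqrt (i+1)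
      = ∑ i ∈ Finset.range m, F i * (Real.sqrt (i+1) - Real.sqrt i) := by
  have h1 : ∑ i ∈ Finset.range m, F (i+1) * Real.sqrt (i+1)
      = ∑ i ∈ Finset.range m, F i * Real.sqrt i := by
    have := Finset.sum_range_succ' (fun i => F i * Real.sqrt i) m
    rw [Finset.sum_range_succ] at this
    simp only [Nat.cast_zero, Real.sqrt_zero, mul_zero, add_zero] at this
    rw [hFm] at this
    simp only [zero_mul, add_zero] at this
    push_cast at this ⊢
    linarith [this]
  calc ∑ i ∈ Finset.range m, (F i - F (i+1)) * Real.sqrt (i+1)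
      = ∑ i ∈ Finset.range m, (F i * Real.sqrt (i+1) - F (i+1) * Real.sqrt (i+1)) := by
        apply Finset.sum_congr rfl; intros; ring
    _ = ∑ i ∈ Finset.range m, F i * Real.sqrt (i+1)
        - ∑ i ∈ Finset.range m, F (i+1) * Real.sqrt (i+1) := Finset.sum_sub_distrib _ _
    _ = ∑ i ∈ Finset.range m, F i * Real.sqrt (i+1)
        - ∑ i ∈ Finset.range m, F i * Real.sqrt i := by rw [h1]
    _ = _ := by rw [← Finset.sum_sub_distrib]; apply Finset.sum_congr rfl; intros; ring

section MGfacts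
variable {V : Type*} [Fintype V] (G : SimpleGraph V)

lemma MG_mem {X Y : Finset V} (hX : X.Nonempty) (hY : Y.Nonempty) :
    (eXY G X Y : ℝ) / Real.sqrt ((X.card : ℝ) * (Y.card : ℝ)) ∈
      {r : ℝ | ∃ X Y : Finset V, X.Nonempty ∧ Y.Nonempty ∧
        r = (eXY G X Y : ℝ) / Real.sqrt ((X.card : ℝ) * (Y.card : ℝ))} :=
  ⟨X, Y, hX, hY, rfl⟩

lemma MG_bddAbove : BddAbove {r : ℝ | ∃ X Y : Finset V, X.Nonempty ∧ Y.Nonempty ∧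
    r = (eXY G X Y : ℝ) / Real.sqrt ((X.card : ℝ) * (Y.card : ℝ))} := by
  refine ⟨(Fintype.card V : ℝ), ?_⟩
  rintro r ⟨X, Y, hX, hY, rfl⟩
  have hcard : (0:ℝ) < (X.card : ℝ) * (Y.card : ℝ) := by
    have := hX.card_pos; have := hY.card_pos
    positivity
  have hs : (0:ℝ) < Real.sqrt ((X.card : ℝ) * (Y.card : ℝ)) := Real.sqrt_pos.2 hcard
  rw [div_le_iff₀ hs]
  have he : (eXY G X Y : ℝ) ≤ (X.card : ℝ) * (Y.card : ℝ) := by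
    have h1 : eXY G X Y ≤ X.card * Y.card := by
      classical
      unfold eXY
      calc ((X ×ˢ Y).filter fun p => G.Adj p.1 p.2).card ≤ (X ×ˢ Y).card :=
            Finset.card_filter_le _ _
        _ = X.card * Y.card := Finset.card_product X Y
    exact_mod_cast h1
  have hsle : Real.sqrt ((X.card : ℝ) * (Y.card : ℝ)) ≤ (Fintype.card V : ℝ) := by
    have hx : (X.card : ℝ) ≤ (Fintype.card V : ℝ) := by
      exact_mod_cast Finset.card_le_univ X
    have hy : (Y.card : ℝ) ≤ (Fintype.card V : ℝ) := by
      exact_mod_cast Finset.card_le_univ Y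
    have : (X.card : ℝ) * (Y.card : ℝ) ≤ (Fintype.card V : ℝ)^2 := by nlinarith
    calc Real.sqrt ((X.card : ℝ) * (Y.card : ℝ)) ≤ Real.sqrt ((Fintype.card V : ℝ)^2) :=
          Real.sqrt_le_sqrt this
      _ = (Fintype.card V : ℝ) := Real.sqrt_sq (by positivity)
  calc (eXY G X Y : ℝ) ≤ (X.card : ℝ) * (Y.card : ℝ) := he
    _ = Real.sqrt ((X.card : ℝ) * (Y.card : ℝ)) * Real.sqrt ((X.card : ℝ) * (Y.card : ℝ)) :=
        (Real.mul_self_sqrt hcard.le).symm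
    _ ≤ (Fintype.card V : ℝ) * Real.sqrt ((X.card : ℝ) * (Y.card : ℝ)) :=
        mul_le_mul_of_nonneg_right hsle hs.le

lemma MG_nonneg (hV : Nonempty V) : 0 ≤ MG G := by
  obtain ⟨v⟩ := hV
  have hz : eXY G {v} {v} = 0 := by
    classical
    unfold eXY
    rw [Finset.card_eq_zero, Finset.filter_eq_empty_iff]
    rintro ⟨a, b⟩ hab
    simp only [Finset.mem_product, Finset.mem_singleton] at hab
    rw [hab.1, hab.2]
    exact G.irrefl
  have h0 : (0:ℝ) ∈ {r : ℝ | ∃ X Y : Finset V, X.Nonempty ∧ Y.Nonempty ∧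
      r = (eXY G X Y : ℝ) / Real.sqrt ((X.card : ℝ) * (Y.card : ℝ))} := by
    refine ⟨{v}, {v}, Finset.singleton_nonempty v, Finset.singleton_nonempty v, ?_⟩
    rw [hz]; simp
  exact le_csSup (MG_bddAbove G) h0

lemma eXY_le_MG {X Y : Finset V} (hX : X.Nonempty) (hY : Y.Nonempty) :
    (eXY G X Y : ℝ) ≤ MG G * Real.sqrt ((X.card : ℝ) * (Y.card : ℝ)) := by
  have hcard : (0:ℝ) < (X.card : ℝ) * (Y.card : ℝ) := by
    have := hX.card_pos; have := hY.card_pos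
    positivity
  have hs : (0:ℝ) < Real.sqrt ((X.card : ℝ) * (Y.card : ℝ)) := Real.sqrt_pos.2 hcard
  have hle : (eXY G X Y : ℝ) / Real.sqrt ((X.card : ℝ) * (Y.card : ℝ)) ≤ MG G :=
    le_csSup (MG_bddAbove G) (MG_mem G hX hY)
  calc (eXY G X Y : ℝ) = ((eXY G X Y : ℝ) / Real.sqrt ((X.card : ℝ) * (Y.card : ℝ)))
        * Real.sqrt ((X.card : ℝ) * (Y.card : ℝ)) := by field_simp
    _ ≤ MG G * Real.sqrt ((X.card : ℝ) * (Y.card : ℝ)) :=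
        mul_le_mul_of_nonneg_right hle hs.le

end MGfacts


lemma exists_enum {V : Type*} [DecidableEq V] (U : Finset V) (f : V → ℝ) :
    ∃ φ : Fin U.card → V, Function.Injective φ ∧ (∀ i, φ i ∈ U) ∧
      (Finset.image φ Finset.univ = U) ∧ (Antitone fun i => f (φ i)) := by
  classical
  let e : ↥U ≃ Fin U.card := Fintype.equivFinOfCardEq (Fintype.card_coe U)
  let σ := Tuple.sort (fun i => -f ((e.symm i) : V))
  have hinj : Function.Injective (fun i => ((e.symm (σ i)) : V)) :=
    fun i j h => σ.injective (e.symm.injective (Subtype.coe_injective h))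
  refine ⟨fun i => ((e.symm (σ i)) : V), hinj, ?_, ?_, ?_⟩
  · intro i; exact (e.symm (σ i)).2
  · apply Finset.eq_of_subset_of_card_le
    · intro x hx
      simp only [Finset.mem_image] at hx
      obtain ⟨i, _, rfl⟩ := hx
      exact (e.symm (σ i)).2
    · rw [Finset.card_image_of_injective _ hinj, Finset.card_univ, Fintype.card_fin]
  · intro i j hij
    have := Tuple.monotone_sort (fun i => -f ((e.symm i) : V)) hij
    simp only [Function.comp_apply, neg_le_neg_iff] at this
    exact this

lemma side {V : Type*} [DecidableEq V] (U : Finset V) (f : V → ℝ)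
    (hU : U.Nonempty) (hf : ∀ v, 0 ≤ f v) :
    ∃ (S : ℕ → Finset V) (t : ℕ → ℝ),
      (∀ i, i < U.card → (S i).Nonempty ∧ (S i).card = i + 1 ∧ S i ⊆ U) ∧
      (∀ i, 0 ≤ t i) ∧
      (∀ B : V → ℝ, ∑ u ∈ U, f u * B u
          = ∑ i ∈ Finset.range U.card, t i * ∑ x ∈ S i, B x) ∧
      (∑ i ∈ Finset.range U.card, t i * Real.sqrt ((i:ℝ)+1)
          ≤ Real.sqrt ((1/4) * Real.log U.card + 1) * Real.sqrt (∑ u ∈ U, f u ^ 2)) := by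
  classical
  set m := U.card with hm
  have hm1 : 1 ≤ m := hU.card_pos
  obtain ⟨φ, hφinj, hφmem, hφimg, hφanti⟩ := exists_enum U f
  set φ' : ℕ → V := fun k => φ ⟨min k (m-1), by omega⟩ with hφ'
  have hφ'k : ∀ k (hk : k < m), φ' k = φ ⟨k, hk⟩ := by
    intro k hk
    simp only [hφ']
    congr 1
    exact Fin.ext (by simp; omega)
  set Fn : ℕ → ℝ := fun k => if h : k < m then f (φ ⟨k, h⟩) else 0 with hFn
  have hFn_lt : ∀ k (h : k < m), Fn k = f (φ' k) := by
    intro k h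
    rw [hφ'k k h]
    simp only [hFn, dif_pos h]
  have hFn_ge : ∀ k, m ≤ k → Fn k = 0 := by
    intro k h
    simp only [hFn, dif_neg (by omega : ¬ k < m)]
  have hFn_nonneg : ∀ k, 0 ≤ Fn k := by
    intro k
    by_cases h : k < m
    · rw [hFn_lt k h]; exact hf _
    · rw [hFn_ge k (by omega)]
  have hFn_anti : ∀ k, Fn (k+1) ≤ Fn k := by
    intro k
    by_cases h1 : k + 1 < m
    · have h0 : k < m := by omega
      simp only [hFn, dif_pos h1, dif_pos h0]
      exact hφanti (by simp [Fin.le_def] : (⟨k, h0⟩ : Fin m) ≤ ⟨k+1, h1⟩)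
    · rw [hFn_ge (k+1) (by omega)]
      exact hFn_nonneg k
  set t : ℕ → ℝ := fun i => Fn i - Fn (i+1) with ht
  have ht_nonneg : ∀ i, 0 ≤ t i := fun i => sub_nonneg.2 (hFn_anti i)
  set S : ℕ → Finset V := fun i => (Finset.range (i+1)).image φ' with hS
  have hφ'inj : ∀ i, i < m → Set.InjOn φ' (Finset.range (i+1)) := by
    intro i hi k hk l hl hkl
    simp only [Finset.coe_range, Set.mem_Iio] at hk hl
    have hk' : k < m := by omega
    have hl' : l < m := by omega
    rw [hφ'k k hk', hφ'k l hl'] at hkl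
    simpa using hφinj hkl
  have hScard : ∀ i, i < m → (S i).card = i + 1 := by
    intro i hi
    rw [hS]
    simp only
    rw [Finset.card_image_of_injOn (hφ'inj i hi), Finset.card_range]
  have hSsub : ∀ i, S i ⊆ U := by
    intro i x hx
    simp only [hS, Finset.mem_image] at hx
    obtain ⟨k, _, rfl⟩ := hx
    simp only [hφ']
    exact hφmem _
  -- image of range m under φ' is U
  have himg : (Finset.range m).image φ' = U := by
    apply Finset.eq_of_subset_of_card_le
    · intro x hx
      simp only [Finset.mem_image] at hx
      obtain ⟨k, _, rfl⟩ := hx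
      exact hφmem _
    · rw [Finset.card_image_of_injOn (by
        intro k hk l hl hkl
        simp only [Finset.coe_range, Set.mem_Iio] at hk hl
        rw [hφ'k k hk, hφ'k l hl] at hkl
        simpa using hφinj hkl), Finset.card_range]
  have htel : ∀ k, k < m → Fn k = ∑ i ∈ Finset.Ico k m, t i := by
    intro k hk
    rw [ht]
    simp only
    rw [aux_telescope Fn (le_of_lt hk), hFn_ge m le_rfl, sub_zero]
  refine ⟨S, t, fun i hi => ⟨?_, hScard i hi, hSsub i⟩, ht_nonneg, ?_, ?_⟩
  · rw [← Finset.card_pos, hScard i hi]; omega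
  · -- linearity identity
    intro B
    have step1 : ∑ u ∈ U, f u * B u = ∑ k ∈ Finset.range m, Fn k * B (φ' k) := by
      rw [← himg, Finset.sum_image (by
        intro k hk l hl hkl
        simp only [Finset.coe_range, Set.mem_Iio] at hk hl
        rw [hφ'k k hk, hφ'k l hl] at hkl
        simpa using hφinj hkl)]
      apply Finset.sum_congr rfl
      intro k hk
      simp only [Finset.mem_range] at hk
      rw [hFn_lt k hk]
    rw [step1]
    have step2 : ∑ k ∈ Finset.range m, Fn k * B (φ' k)
        = ∑ k ∈ Finset.range m, ∑ i ∈ Finset.Ico k m, t i * B (φ' k) := by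
      apply Finset.sum_congr rfl
      intro k hk
      simp only [Finset.mem_range] at hk
      rw [htel k hk, Finset.sum_mul]
    rw [step2]
    have step3 : ∑ k ∈ Finset.range m, ∑ i ∈ Finset.Ico k m, t i * B (φ' k)
        = ∑ i ∈ Finset.range m, ∑ k ∈ Finset.range (i+1), t i * B (φ' k) := by
      simp only [Finset.range_eq_Ico]
      exact Finset.sum_Ico_Ico_comm 0 m (fun k i => t i * B (φ' k))
    rw [step3]
    apply Finset.sum_congr rfl
    intro i hi
    simp only [Finset.mem_range] at hi
    rw [Finset.mul_sum, hS]
    simp only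
    rw [Finset.sum_image (hφ'inj i hi)]
  · -- Cauchy-Schwarz bound
    have habel : ∑ i ∈ Finset.range m, t i * Real.sqrt ((i:ℝ)+1)
        = ∑ i ∈ Finset.range m, Fn i * (Real.sqrt ((i:ℝ)+1) - Real.sqrt (i:ℝ)) := by
      exact aux_abel Fn m (hFn_ge m le_rfl)
    rw [habel]
    have hcs := Real.sum_mul_le_sqrt_mul_sqrt (Finset.range m) Fn
      (fun i => Real.sqrt ((i:ℝ)+1) - Real.sqrt (i:ℝ))
    have hsum_sq : ∑ i ∈ Finset.range m, Fn i ^ 2 = ∑ u ∈ U, f u ^ 2 := by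
      rw [← himg, Finset.sum_image (by
        intro k hk l hl hkl
        simp only [Finset.coe_range, Set.mem_Iio] at hk hl
        rw [hφ'k k hk, hφ'k l hl] at hkl
        simpa using hφinj hkl)]
      apply Finset.sum_congr rfl
      intro k hk
      simp only [Finset.mem_range] at hk
      rw [hFn_lt k hk]
    have hsqs : Real.sqrt (∑ i ∈ Finset.range m, (Real.sqrt ((i:ℝ)+1) - Real.sqrt (i:ℝ))^2)
        ≤ Real.sqrt ((1/4) * Real.log m + 1) :=
      Real.sqrt_le_sqrt (aux_sqrt_sum hm1)
    calc ∑ i ∈ Finset.range m, Fn i * (Real.sqrt ((i:ℝ)+1) - Real.sqrt (i:ℝ))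
        ≤ Real.sqrt (∑ i ∈ Finset.range m, Fn i ^ 2) *
          Real.sqrt (∑ i ∈ Finset.range m, (Real.sqrt ((i:ℝ)+1) - Real.sqrt (i:ℝ))^2) := hcs
      _ ≤ Real.sqrt (∑ i ∈ Finset.range m, Fn i ^ 2) * Real.sqrt ((1/4) * Real.log m + 1) :=
          mul_le_mul_of_nonneg_left hsqs (Real.sqrt_nonneg _)
      _ = Real.sqrt ((1/4) * Real.log m + 1) * Real.sqrt (∑ u ∈ U, f u ^ 2) := by
          rw [hsum_sq, mul_comm]

open Classical in
lemma eXY_eq_sum {V : Type*} (G : SimpleGraph V) (A : Matrix V V ℝ)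
    (hA01 : ∀ a b, A a b = if G.Adj a b then (1:ℝ) else 0)
    (X Y : Finset V) : (eXY G X Y : ℝ) = ∑ x ∈ X, ∑ y ∈ Y, A x y := by
  classical
  unfold eXY
  rw [Finset.card_filter]
  push_cast
  rw [Finset.sum_product]
  apply Finset.sum_congr rfl
  intro x _
  apply Finset.sum_congr rfl
  intro y _
  rw [hA01 x y]

open Classical in
lemma core {V : Type*} [Fintype V] (G : SimpleGraph V) (A : Matrix V V ℝ)
    (hA01 : ∀ a b, A a b = if G.Adj a b then (1:ℝ) else 0)
    (U W : Finset V) (hU : U.Nonempty) (hW : W.Nonempty)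
    (f g : V → ℝ) (hf : ∀ v, 0 ≤ f v) (hg : ∀ v, 0 ≤ g v) :
    ∑ u ∈ U, ∑ w ∈ W, A u w * f u * g w ≤
      MG G * (Real.sqrt ((1/4) * Real.log U.card + 1) * Real.sqrt (∑ u ∈ U, f u ^ 2))
           * (Real.sqrt ((1/4) * Real.log W.card + 1) * Real.sqrt (∑ w ∈ W, g w ^ 2)) := by
  classical
  have hV : Nonempty V := ⟨hU.choose⟩
  obtain ⟨S, t, hS, ht, hlinU, hcsU⟩ := side U f hU hf
  obtain ⟨T, s, hT, hs, hlinW, hcsW⟩ := side W g hW hg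
  set m := U.card
  set n := W.card
  have key : ∑ u ∈ U, ∑ w ∈ W, A u w * f u * g w
      = ∑ i ∈ Finset.range m, ∑ j ∈ Finset.range n,
          t i * s j * ∑ x ∈ S i, ∑ y ∈ T j, A x y := by
    have h1 : ∑ u ∈ U, ∑ w ∈ W, A u w * f u * g w
        = ∑ u ∈ U, f u * (∑ w ∈ W, g w * A u w) := by
      apply Finset.sum_congr rfl
      intro u _
      rw [Finset.mul_sum]
      apply Finset.sum_congr rfl
      intro w _
      ring
    rw [h1, hlinU (fun u => ∑ w ∈ W, g w * A u w)]
    apply Finset.sum_congr rfl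
    intro i _
    have h2 : ∑ x ∈ S i, ∑ w ∈ W, g w * A x w = ∑ w ∈ W, g w * (∑ x ∈ S i, A x w) := by
      rw [Finset.sum_comm]
      apply Finset.sum_congr rfl
      intro w _
      rw [Finset.mul_sum]
    rw [h2, hlinW (fun w => ∑ x ∈ S i, A x w)]
    rw [Finset.mul_sum]
    apply Finset.sum_congr rfl
    intro j _
    rw [Finset.sum_comm (s := T j)]
    ring
  rw [key]
  have step : ∑ i ∈ Finset.range m, ∑ j ∈ Finset.range n,
      t i * s j * ∑ x ∈ S i, ∑ y ∈ T j, A x y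
      ≤ ∑ i ∈ Finset.range m, ∑ j ∈ Finset.range n,
        MG G * (t i * Real.sqrt ((i:ℝ)+1)) * (s j * Real.sqrt ((j:ℝ)+1)) := by
    apply Finset.sum_le_sum
    intro i hi
    apply Finset.sum_le_sum
    intro j hj
    simp only [Finset.mem_range] at hi hj
    obtain ⟨hSne, hScard, _⟩ := hS i hi
    obtain ⟨hTne, hTcard, _⟩ := hT j hj
    have he : ∑ x ∈ S i, ∑ y ∈ T j, A x y ≤ MG G * (Real.sqrt ((i:ℝ)+1) * Real.sqrt ((j:ℝ)+1)) := by
      rw [← eXY_eq_sum G A hA01]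
      have := eXY_le_MG G hSne hTne
      rw [hScard, hTcard] at this
      push_cast at this
      rwa [Real.sqrt_mul (by positivity)] at this
    calc t i * s j * ∑ x ∈ S i, ∑ y ∈ T j, A x y
        ≤ t i * s j * (MG G * (Real.sqrt ((i:ℝ)+1) * Real.sqrt ((j:ℝ)+1))) := by
          apply mul_le_mul_of_nonneg_left he (mul_nonneg (ht i) (hs j))
      _ = MG G * (t i * Real.sqrt ((i:ℝ)+1)) * (s j * Real.sqrt ((j:ℝ)+1)) := by ring
  refine step.trans ?_
  have hfact : ∑ i ∈ Finset.range m, ∑ j ∈ Finset.range n,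
      MG G * (t i * Real.sqrt ((i:ℝ)+1)) * (s j * Real.sqrt ((j:ℝ)+1))
      = MG G * (∑ i ∈ Finset.range m, t i * Real.sqrt ((i:ℝ)+1))
             * (∑ j ∈ Finset.range n, s j * Real.sqrt ((j:ℝ)+1)) := by
    have h := Finset.sum_mul_sum (Finset.range m) (Finset.range n)
      (fun i => t i * Real.sqrt ((i:ℝ)+1)) (fun j => s j * Real.sqrt ((j:ℝ)+1))
    calc ∑ i ∈ Finset.range m, ∑ j ∈ Finset.range n,
        MG G * (t i * Real.sqrt ((i:ℝ)+1)) * (s j * Real.sqrt ((j:ℝ)+1))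
        = MG G * ∑ i ∈ Finset.range m, ∑ j ∈ Finset.range n,
            (t i * Real.sqrt ((i:ℝ)+1)) * (s j * Real.sqrt ((j:ℝ)+1)) := by
          rw [Finset.mul_sum]
          apply Finset.sum_congr rfl
          intro i _
          rw [Finset.mul_sum]
          apply Finset.sum_congr rfl
          intro j _
          ring
      _ = MG G * ((∑ i ∈ Finset.range m, t i * Real.sqrt ((i:ℝ)+1))
            * (∑ j ∈ Finset.range n, s j * Real.sqrt ((j:ℝ)+1))) := by rw [← h]
      _ = MG G * (∑ i ∈ Finset.range m, t i * Real.sqrt ((i:ℝ)+1))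
            * (∑ j ∈ Finset.range n, s j * Real.sqrt ((j:ℝ)+1)) := by ring
  rw [hfact]
  have h1 : (0:ℝ) ≤ ∑ i ∈ Finset.range m, t i * Real.sqrt ((i:ℝ)+1) :=
    Finset.sum_nonneg fun i _ => mul_nonneg (ht i) (Real.sqrt_nonneg _)
  have h2 : (0:ℝ) ≤ ∑ j ∈ Finset.range n, s j * Real.sqrt ((j:ℝ)+1) :=
    Finset.sum_nonneg fun j _ => mul_nonneg (hs j) (Real.sqrt_nonneg _)
  have hM := MG_nonneg G hV
  calc MG G * (∑ i ∈ Finset.range m, t i * Real.sqrt ((i:ℝ)+1))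
          * (∑ j ∈ Finset.range n, s j * Real.sqrt ((j:ℝ)+1))
      ≤ MG G * (Real.sqrt ((1/4) * Real.log m + 1) * Real.sqrt (∑ u ∈ U, f u ^ 2))
          * (∑ j ∈ Finset.range n, s j * Real.sqrt ((j:ℝ)+1)) := by
        apply mul_le_mul_of_nonneg_right (mul_le_mul_of_nonneg_left hcsU hM) h2
    _ ≤ MG G * (Real.sqrt ((1/4) * Real.log m + 1) * Real.sqrt (∑ u ∈ U, f u ^ 2))
          * (Real.sqrt ((1/4) * Real.log n + 1) * Real.sqrt (∑ w ∈ W, g w ^ 2)) := by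
        apply mul_le_mul_of_nonneg_left hcsW
        exact mul_nonneg hM (mul_nonneg (Real.sqrt_nonneg _) (Real.sqrt_nonneg _))


section Spec
variable {V : Type*} [Fintype V] [DecidableEq V] {A : Matrix V V ℝ}

lemma mem_spectrum_of_eigen {μ : ℝ} {v : V → ℝ} (hv : v ≠ 0)
    (h : A.mulVec v = μ • v) : μ ∈ spectrum ℝ A := by
  rw [spectrum.mem_iff]
  intro hunit
  apply hv
  obtain ⟨B, hB⟩ := hunit.exists_left_inv
  have hzero : (algebraMap ℝ (Matrix V V ℝ) μ - A).mulVec v = 0 := by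
    rw [Matrix.sub_mulVec, h, Matrix.algebraMap_eq_diagonal]
    ext a
    simp [Matrix.mulVec_diagonal]
  calc v = (1 : Matrix V V ℝ).mulVec v := (Matrix.one_mulVec v).symm
    _ = (B * (algebraMap ℝ (Matrix V V ℝ) μ - A)).mulVec v := by rw [hB]
    _ = B.mulVec ((algebraMap ℝ (Matrix V V ℝ) μ - A).mulVec v) :=
        (Matrix.mulVec_mulVec v B _).symm
    _ = 0 := by rw [hzero]; exact Matrix.mulVec_zero B

lemma eigen_of_mem_spectrum {μ : ℝ} (h : μ ∈ spectrum ℝ A) :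
    ∃ v : V → ℝ, v ≠ 0 ∧ A.mulVec v = μ • v := by
  rw [spectrum.mem_iff] at h
  rw [Matrix.isUnit_iff_isUnit_det, isUnit_iff_ne_zero, not_not] at h
  obtain ⟨v, hv0, hv⟩ := (Matrix.exists_mulVec_eq_zero_iff).2 h
  refine ⟨v, hv0, ?_⟩
  rw [Matrix.sub_mulVec, Matrix.algebraMap_eq_diagonal, sub_eq_zero] at hv
  rw [← hv]
  ext a
  simp [Matrix.mulVec_diagonal]

omit [DecidableEq V] in
lemma inner_eq_dot (u v : EuclideanSpace ℝ V) :
    (inner ℝ u v : ℝ) = ∑ a, u a * v a := by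
  simp [PiLp.inner_apply, RCLike.inner_apply, mul_comm]

lemma dot_sym (hA : A.IsHermitian) (x y : V → ℝ) :
    ∑ a, x a * (A *ᵥ y) a = ∑ a, (A *ᵥ x) a * y a := by
  calc ∑ a, x a * (A *ᵥ y) a = x ⬝ᵥ (A *ᵥ y) := rfl
    _ = (x ᵥ* A) ⬝ᵥ y := Matrix.dotProduct_mulVec _ _ _
    _ = (Aᵀ *ᵥ x) ⬝ᵥ y := by rw [Matrix.mulVec_transpose]
    _ = (A *ᵥ x) ⬝ᵥ y := by
        have hT : Aᵀ = A := by
          ext a c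
          have := congrFun (congrFun hA a) c
          simpa [Matrix.conjTranspose_apply] using this
        rw [hT]
    _ = ∑ a, (A *ᵥ x) a * y a := rfl

lemma basis_coeff (hA : A.IsHermitian) (y : V → ℝ) (j : V) :
    (inner ℝ (hA.eigenvectorBasis j) (WithLp.toLp 2 (A.mulVec y)) : ℝ)
      = hA.eigenvalues j * inner ℝ (hA.eigenvectorBasis j) (WithLp.toLp 2 y) := by
  rw [inner_eq_dot, inner_eq_dot]
  calc ∑ a, (hA.eigenvectorBasis j) a * (A *ᵥ y) a
      = ∑ a, (A *ᵥ ⇑(hA.eigenvectorBasis j)) a * y a := dot_sym hA _ y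
    _ = ∑ a, (hA.eigenvalues j • ⇑(hA.eigenvectorBasis j)) a * y a := by
        rw [hA.mulVec_eigenvectorBasis]
    _ = hA.eigenvalues j * ∑ a, (hA.eigenvectorBasis j) a * y a := by
        rw [Finset.mul_sum]
        apply Finset.sum_congr rfl
        intro a _
        simp [mul_assoc]

lemma spec_eq_range (hA : A.IsHermitian) :
    spectrum ℝ A = Set.range hA.eigenvalues := by
  ext μ
  constructor
  · intro h
    obtain ⟨v, hv0, hv⟩ := eigen_of_mem_spectrum h
    by_contra hno
    simp only [Set.mem_range, not_exists] at hno
    apply hv0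
    set b := hA.eigenvectorBasis with hb
    have hcoef : ∀ j, (inner ℝ (b j) (WithLp.toLp 2 v) : ℝ) = 0 := by
      intro j
      have h1 := basis_coeff hA v j
      have h2 : (inner ℝ (b j) (WithLp.toLp 2 (A.mulVec v)) : ℝ)
          = μ * inner ℝ (b j) (WithLp.toLp 2 v) := by
        rw [hv, inner_eq_dot, inner_eq_dot, Finset.mul_sum]
        apply Finset.sum_congr rfl
        intro a _
        simp [Pi.smul_apply, smul_eq_mul]
        ring
      have h3 := h1.symm.trans h2
      by_contra hc
      exact hno j (mul_right_cancel₀ hc h3)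
    have hrepr : b.repr (WithLp.toLp 2 v) = 0 := by
      ext j
      rw [b.repr_apply_apply]
      exact hcoef j
    have : (WithLp.toLp 2 v : EuclideanSpace ℝ V) = 0 := by
      apply b.repr.injective
      rw [hrepr, map_zero]
    exact congrArg WithLp.ofLp this
  · rintro ⟨j, rfl⟩
    exact hA.eigenvalues_mem_spectrum_real j

lemma bilin_le (hV : Nonempty V) (hA : A.IsHermitian) {Λ : ℝ}
    (hΛ : ∀ j : V, |hA.eigenvalues j| ≤ Λ) (x y : V → ℝ) :
    ∑ a, x a * (A *ᵥ y) a
      ≤ Λ * Real.sqrt (∑ a, x a ^ 2) * Real.sqrt (∑ a, y a ^ 2) := by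
  set b := hA.eigenvectorBasis with hb
  set x' : EuclideanSpace ℝ V := WithLp.toLp 2 x with hx'
  set y' : EuclideanSpace ℝ V := WithLp.toLp 2 y with hy'
  set cx : V → ℝ := fun j => (inner ℝ x' (b j) : ℝ) with hcx
  set cy : V → ℝ := fun j => (inner ℝ (b j) y' : ℝ) with hcy
  have hexp : ∑ a, x a * (A *ᵥ y) a = ∑ j, hA.eigenvalues j * (cx j * cy j) := by
    have h0 := b.sum_inner_mul_inner x' (WithLp.toLp 2 (A.mulVec y : V → ℝ))
    have h1 : (inner ℝ x' (WithLp.toLp 2 (A.mulVec y : V → ℝ)) : ℝ)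
        = ∑ a, x a * (A *ᵥ y) a := inner_eq_dot _ _
    rw [← h1, ← h0]
    apply Finset.sum_congr rfl
    intro j _
    have h2 : (inner ℝ (b j) (WithLp.toLp 2 (A.mulVec y : V → ℝ)) : ℝ)
        = hA.eigenvalues j * cy j := basis_coeff hA y j
    rw [h2]
    ring
  have hparse_x : ∑ j, cx j ^ 2 = ∑ a, x a ^ 2 := by
    have h0 := b.sum_inner_mul_inner x' x'
    rw [inner_eq_dot x' x'] at h0
    calc ∑ j, cx j ^ 2 = ∑ j, (inner ℝ x' (b j) : ℝ) * (inner ℝ (b j) x' : ℝ) := by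
          apply Finset.sum_congr rfl
          intro j _
          simp only [hcx]
          rw [sq, real_inner_comm x' (b j)]
      _ = ∑ a, x a * x a := h0
      _ = ∑ a, x a ^ 2 := by apply Finset.sum_congr rfl; intros; ring
  have hparse_y : ∑ j, cy j ^ 2 = ∑ a, y a ^ 2 := by
    have h0 := b.sum_inner_mul_inner y' y'
    rw [inner_eq_dot y' y'] at h0
    calc ∑ j, cy j ^ 2 = ∑ j, (inner ℝ y' (b j) : ℝ) * (inner ℝ (b j) y' : ℝ) := by
          apply Finset.sum_congr rfl
          intro j _
          simp only [hcy]
          rw [real_inner_comm y' (b j), sq]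
      _ = ∑ a, y a * y a := h0
      _ = ∑ a, y a ^ 2 := by apply Finset.sum_congr rfl; intros; ring
  rw [hexp]
  have hcs := Real.sum_mul_le_sqrt_mul_sqrt (Finset.univ : Finset V)
    (fun j => |cx j|) (fun j => |cy j|)
  simp only [sq_abs] at hcs
  calc ∑ j, hA.eigenvalues j * (cx j * cy j)
      ≤ ∑ j, Λ * (|cx j| * |cy j|) := by
        apply Finset.sum_le_sum
        intro j _
        calc hA.eigenvalues j * (cx j * cy j) ≤ |hA.eigenvalues j * (cx j * cy j)| :=
              le_abs_self _
          _ = |hA.eigenvalues j| * (|cx j| * |cy j|) := by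
              rw [abs_mul, abs_mul]
          _ ≤ Λ * (|cx j| * |cy j|) := by
              apply mul_le_mul_of_nonneg_right (hΛ j)
              positivity
    _ = Λ * ∑ j, |cx j| * |cy j| := by rw [Finset.mul_sum]
    _ ≤ Λ * (Real.sqrt (∑ j, cx j ^ 2) * Real.sqrt (∑ j, cy j ^ 2)) := by
        have hΛ0 : 0 ≤ Λ := le_trans (abs_nonneg _) (hΛ (Classical.choice hV))
        apply mul_le_mul_of_nonneg_left _ hΛ0
        exact hcs
    _ = Λ * Real.sqrt (∑ a, x a ^ 2) * Real.sqrt (∑ a, y a ^ 2) := by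
        rw [hparse_x, hparse_y]; ring
end Spec

/-- Theorem 1′: for a bipartite graph with partite sets `U`, `W`,
`M(G) ≤ λmax(G) ≤ √(((1/4)·log|U| + 1)·((1/4)·log|W| + 1))·M(G)`. -/
theorem statement8 {V : Type*} [Fintype V] (G : SimpleGraph V)
    (U W : Finset V) (hU : U.Nonempty) (hW : W.Nonempty)
    (hdisj : Disjoint U W) (hcover : ∀ v : V, v ∈ U ∨ v ∈ W)
    (hbip : ∀ a b, G.Adj a b → (a ∈ U ∧ b ∈ W) ∨ (a ∈ W ∧ b ∈ U)) :
    MG G ≤ lamMax G ∧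
      lamMax G ≤ Real.sqrt (((1 / 4 : ℝ) * Real.log (U.card : ℝ) + 1) *
        ((1 / 4 : ℝ) * Real.log (W.card : ℝ) + 1)) * MG G := by
  classical
  have hV : Nonempty V := ⟨hU.choose⟩
  have hlam : lamMax G = sSup (spectrum ℝ (G.adjMatrix ℝ)) := rfl
  set A := G.adjMatrix ℝ with hAdef
  have hA01 : ∀ a b, A a b = if G.Adj a b then (1:ℝ) else 0 := by
    intro a b
    rw [hAdef]
    by_cases h : G.Adj a b <;> simp [h]
  have hApos : ∀ a b, 0 ≤ A a b := by
    intro a b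
    rw [hA01]
    split_ifs <;> norm_num
  have hHerm : A.IsHermitian := by
    show Aᴴ = A
    ext a b
    rw [Matrix.conjTranspose_apply, star_trivial, hA01, hA01]
    by_cases h : G.Adj a b
    · simp [h, h.symm]
    · have h' : ¬ G.Adj b a := fun hba => h hba.symm
      simp [h, h']
  have hsame : ∀ a b, A a b ≠ 0 → (a ∈ U ∧ b ∈ W) ∨ (a ∈ W ∧ b ∈ U) := by
    intro a b hab
    apply hbip
    by_contra h
    exact hab (by rw [hA01, if_neg h])
  have hspec := spec_eq_range hHerm
  have hbdd : BddAbove (spectrum ℝ A) := by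
    rw [hspec]; exact (Set.finite_range _).bddAbove
  have hspec_ne : (spectrum ℝ A).Nonempty := by
    rw [hspec]; exact Set.range_nonempty _
  have huniv : (Finset.univ : Finset V) = U ∪ W := by
    ext a; simpa using hcover a
  -- abbreviations
  set CU : ℝ := (1 / 4 : ℝ) * Real.log (U.card : ℝ) + 1 with hCU
  set CW : ℝ := (1 / 4 : ℝ) * Real.log (W.card : ℝ) + 1 with hCW
  have hCU0 : 0 ≤ CU := by
    have : (0:ℝ) ≤ Real.log (U.card : ℝ) :=
      Real.log_nonneg (by exact_mod_cast hU.card_pos)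
    rw [hCU]; linarith
  have hCW0 : 0 ≤ CW := by
    have : (0:ℝ) ≤ Real.log (W.card : ℝ) :=
      Real.log_nonneg (by exact_mod_cast hW.card_pos)
    rw [hCW]; linarith
  have hCmul : Real.sqrt CU * Real.sqrt CW = Real.sqrt (CU * CW) :=
    (Real.sqrt_mul hCU0 _).symm
  have hMG0 : 0 ≤ MG G := MG_nonneg G hV
  -- Rayleigh quotient bound for arbitrary vectors
  have hexpand : ∀ x y : V → ℝ, ∑ a, x a * (A *ᵥ y) a = ∑ a, ∑ b, A a b * x a * y b := by
    intro x y
    apply Finset.sum_congr rfl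
    intro a _
    simp only [Matrix.mulVec, dotProduct]
    rw [Finset.mul_sum]
    apply Finset.sum_congr rfl
    intro b _
    ring
  have hray : ∀ v : V → ℝ,
      ∑ a, v a * (A *ᵥ v) a ≤ Real.sqrt (CU * CW) * MG G * ∑ a, v a ^ 2 := by
    intro v
    set w : V → ℝ := fun a => |v a| with hw
    have hw0 : ∀ a, 0 ≤ w a := fun a => abs_nonneg _
    have h1 : ∑ a, v a * (A *ᵥ v) a ≤ ∑ a, ∑ b, A a b * w a * w b := by
      rw [hexpand v v]
      apply Finset.sum_le_sum
      intro a _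
      apply Finset.sum_le_sum
      intro b _
      calc A a b * v a * v b ≤ |A a b * v a * v b| := le_abs_self _
        _ = A a b * w a * w b := by
            rw [abs_mul, abs_mul, abs_of_nonneg (hApos a b)]
    -- splitting the double sum
    have hinnerU : ∀ a ∈ U, ∑ b, A a b * w a * w b = ∑ b ∈ W, A a b * w a * w b := by
      intro a ha
      rw [show ∑ b, A a b * w a * w b = ∑ b ∈ U ∪ W, A a b * w a * w b by rw [← huniv],
        Finset.sum_union hdisj]
      have : ∑ b ∈ U, A a b * w a * w b = 0 := by
        apply Finset.sum_eq_zero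
        intro b hb
        have : A a b = 0 := by
          by_contra hab
          rcases hsame a b hab with ⟨_, hbW⟩ | ⟨haW, _⟩
          · exact (Finset.disjoint_left.1 hdisj hb) hbW
          · exact (Finset.disjoint_left.1 hdisj ha) haW
        rw [this]; ring
      rw [this, zero_add]
    have hinnerW : ∀ a ∈ W, ∑ b, A a b * w a * w b = ∑ b ∈ U, A a b * w a * w b := by
      intro a ha
      rw [show ∑ b, A a b * w a * w b = ∑ b ∈ U ∪ W, A a b * w a * w b by rw [← huniv],
        Finset.sum_union hdisj]
      have : ∑ b ∈ W, A a b * w a * w b = 0 := by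
        apply Finset.sum_eq_zero
        intro b hb
        have : A a b = 0 := by
          by_contra hab
          rcases hsame a b hab with ⟨haU, _⟩ | ⟨_, hbU⟩
          · exact (Finset.disjoint_left.1 hdisj haU) ha
          · exact (Finset.disjoint_left.1 hdisj hbU) hb
        rw [this]; ring
      rw [this, add_zero]
    have hsym : ∀ a b, A a b = A b a := by
      intro a b
      rw [hA01, hA01]
      by_cases h : G.Adj a b
      · simp [h, h.symm]
      · have h' : ¬ G.Adj b a := fun hba => h hba.symm
        simp [h, h']
    have hsplit : ∑ a, ∑ b, A a b * w a * w b
        = 2 * ∑ p ∈ U, ∑ q ∈ W, A p q * w p * w q := by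
      rw [show ∑ a, ∑ b, A a b * w a * w b
          = ∑ a ∈ U ∪ W, ∑ b, A a b * w a * w b by rw [← huniv],
        Finset.sum_union hdisj]
      rw [Finset.sum_congr rfl hinnerU, Finset.sum_congr rfl hinnerW]
      have hswap : ∑ a ∈ W, ∑ b ∈ U, A a b * w a * w b
          = ∑ p ∈ U, ∑ q ∈ W, A p q * w p * w q := by
        rw [Finset.sum_comm]
        apply Finset.sum_congr rfl
        intro p _
        apply Finset.sum_congr rfl
        intro q _
        rw [hsym q p]
        ring
      rw [hswap]
      ring
    have hcore := core G A hA01 U W hU hW w w hw0 hw0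
    have hsum_abs : ∀ s : Finset V, ∑ a ∈ s, w a ^ 2 = ∑ a ∈ s, v a ^ 2 := by
      intro s
      apply Finset.sum_congr rfl
      intro a _
      rw [hw]
      exact sq_abs (v a)
    set a1 : ℝ := Real.sqrt (∑ p ∈ U, w p ^ 2) with ha1
    set b1 : ℝ := Real.sqrt (∑ q ∈ W, w q ^ 2) with hb1
    have ha1sq : a1 ^ 2 = ∑ p ∈ U, w p ^ 2 := Real.sq_sqrt (by positivity)
    have hb1sq : b1 ^ 2 = ∑ q ∈ W, w q ^ 2 := Real.sq_sqrt (by positivity)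
    have hfinal : 2 * (MG G * (Real.sqrt CU * a1) * (Real.sqrt CW * b1))
        ≤ Real.sqrt (CU * CW) * MG G * ∑ a, v a ^ 2 := by
      have h2ab : 2 * a1 * b1 ≤ a1 ^ 2 + b1 ^ 2 := two_mul_le_add_sq a1 b1
      have hprod : 2 * (MG G * (Real.sqrt CU * a1) * (Real.sqrt CW * b1))
          = (Real.sqrt (CU * CW) * MG G) * (2 * a1 * b1) := by
        rw [← hCmul]; ring
      have hsum : a1 ^ 2 + b1 ^ 2 = ∑ a, v a ^ 2 := by
        rw [ha1sq, hb1sq, hsum_abs U, hsum_abs W,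
          show ∑ a, v a ^ 2 = ∑ a ∈ U ∪ W, v a ^ 2 by rw [← huniv],
          Finset.sum_union hdisj]
      rw [hprod, ← hsum]
      apply mul_le_mul_of_nonneg_left h2ab
      positivity
    calc ∑ a, v a * (A *ᵥ v) a ≤ ∑ a, ∑ b, A a b * w a * w b := h1
      _ = 2 * ∑ p ∈ U, ∑ q ∈ W, A p q * w p * w q := hsplit
      _ ≤ 2 * (MG G * (Real.sqrt CU * a1) * (Real.sqrt CW * b1)) := by
          apply mul_le_mul_of_nonneg_left _ (by norm_num : (0:ℝ) ≤ 2)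
          exact hcore
      _ ≤ Real.sqrt (CU * CW) * MG G * ∑ a, v a ^ 2 := hfinal
  -- upper bound
  have hupper : lamMax G ≤ Real.sqrt (CU * CW) * MG G := by
    rw [hlam]
    apply csSup_le hspec_ne
    intro μ hμ
    obtain ⟨v, hv0, hveig⟩ := eigen_of_mem_spectrum hμ
    have hvv : 0 < ∑ a, v a ^ 2 := by
      obtain ⟨a0, ha0⟩ := Function.ne_iff.1 hv0
      have ha0' : v a0 ≠ 0 := ha0
      have h0 : 0 < v a0 ^ 2 := by positivity
      exact lt_of_lt_of_le h0 (Finset.single_le_sum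
        (fun i _ => sq_nonneg (v i)) (Finset.mem_univ a0))
    have heq : ∑ a, v a * (A *ᵥ v) a = μ * ∑ a, v a ^ 2 := by
      rw [hveig, Finset.mul_sum]
      apply Finset.sum_congr rfl
      intro a _
      simp only [Pi.smul_apply, smul_eq_mul]
      ring
    have := hray v
    rw [heq] at this
    exact (mul_le_mul_iff_of_pos_right hvv).1 this
  -- eigenvalue absolute bound
  have hΛle : ∀ j, |hHerm.eigenvalues j| ≤ lamMax G := by
    intro j
    have hju : hHerm.eigenvalues j ≤ lamMax G := by
      rw [hlam]
      exact le_csSup hbdd (hHerm.eigenvalues_mem_spectrum_real j)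
    set u0 : V → ℝ := ⇑(hHerm.eigenvectorBasis j) with hu0def
    have heig : A *ᵥ u0 = hHerm.eigenvalues j • u0 := hHerm.mulVec_eigenvectorBasis j
    have hu0 : u0 ≠ 0 := by
      intro h0
      have h2 : (inner ℝ (hHerm.eigenvectorBasis j) (hHerm.eigenvectorBasis j) : ℝ) = 0 := by
        rw [inner_eq_dot]
        apply Finset.sum_eq_zero
        intro a _
        have : u0 a = 0 := congrFun h0 a
        rw [show (hHerm.eigenvectorBasis j) a = u0 a from rfl, this, mul_zero]
      exact (hHerm.eigenvectorBasis.orthonormal.ne_zero j) (inner_self_eq_zero.1 h2)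
    set v' : V → ℝ := fun a => if a ∈ U then u0 a else -u0 a with hv'def
    have hv'0 : v' ≠ 0 := by
      intro h0
      apply hu0
      funext a
      have h1 : v' a = 0 := by rw [h0]; rfl
      show u0 a = 0
      rw [hv'def] at h1
      by_cases ha : a ∈ U
      · simpa [ha] using h1
      · simp only [if_neg ha] at h1
        linarith
    have heig' : A *ᵥ v' = (-hHerm.eigenvalues j) • v' := by
      funext a
      rcases hcover a with ha | ha
      · have hterm : ∀ b, A a b * v' b = A a b * (-u0 b) := by
          intro b
          by_cases hab : A a b = 0
          · rw [hab]; ring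
          rcases hsame a b hab with ⟨_, hbW⟩ | ⟨haW, _⟩
          · have hbU : b ∉ U := Finset.disjoint_right.1 hdisj hbW
            rw [hv'def]; simp [hbU]
          · exact absurd ha (Finset.disjoint_right.1 hdisj haW)
        have hL : (A *ᵥ v') a = -((A *ᵥ u0) a) := by
          simp only [Matrix.mulVec, dotProduct]
          rw [Finset.sum_congr rfl (fun b _ => hterm b)]
          rw [← Finset.sum_neg_distrib]
          apply Finset.sum_congr rfl
          intro b _
          ring
        rw [hL, heig]
        have hva : v' a = u0 a := by rw [hv'def]; simp [ha]
        simp only [Pi.smul_apply, smul_eq_mul]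
        rw [hva]
        ring
      · have haU : a ∉ U := Finset.disjoint_right.1 hdisj ha
        have hterm : ∀ b, A a b * v' b = A a b * u0 b := by
          intro b
          by_cases hab : A a b = 0
          · rw [hab]; ring
          rcases hsame a b hab with ⟨haU', _⟩ | ⟨_, hbU⟩
          · exact absurd haU' haU
          · rw [hv'def]; simp [hbU]
        have hL : (A *ᵥ v') a = (A *ᵥ u0) a := by
          simp only [Matrix.mulVec, dotProduct]
          exact Finset.sum_congr rfl (fun b _ => hterm b)
        rw [hL, heig]
        have hva : v' a = -u0 a := by rw [hv'def]; simp [haU]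
        simp only [Pi.smul_apply, smul_eq_mul]
        rw [hva]
        ring
    have hflip : -hHerm.eigenvalues j ∈ spectrum ℝ A := mem_spectrum_of_eigen hv'0 heig'
    have hjl : -hHerm.eigenvalues j ≤ lamMax G := by
      rw [hlam]
      exact le_csSup hbdd hflip
    rw [abs_le]
    exact ⟨by linarith, hju⟩
  -- lower bound : MG ≤ lamMax
  have hlower : MG G ≤ lamMax G := by
    apply csSup_le ⟨_, MG_mem G hU hU⟩
    rintro r ⟨X, Y, hX, hY, rfl⟩
    set x : V → ℝ := fun a => if a ∈ X then (1:ℝ) else 0 with hx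
    set y : V → ℝ := fun a => if a ∈ Y then (1:ℝ) else 0 with hy
    have hx2 : ∑ a, x a ^ 2 = (X.card : ℝ) := by
      rw [show ∑ a, x a ^ 2 = ∑ a, (if a ∈ X then (1:ℝ) else 0) from
        Finset.sum_congr rfl (fun a _ => by rw [hx]; by_cases h : a ∈ X <;> simp [h])]
      rw [Finset.sum_ite_mem, Finset.univ_inter, Finset.sum_const, nsmul_eq_mul, mul_one]
    have hy2 : ∑ a, y a ^ 2 = (Y.card : ℝ) := by
      rw [show ∑ a, y a ^ 2 = ∑ a, (if a ∈ Y then (1:ℝ) else 0) from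
        Finset.sum_congr rfl (fun a _ => by rw [hy]; by_cases h : a ∈ Y <;> simp [h])]
      rw [Finset.sum_ite_mem, Finset.univ_inter, Finset.sum_const, nsmul_eq_mul, mul_one]
    have hstep : ∑ a, x a * (A *ᵥ y) a = ∑ p ∈ X, ∑ q ∈ Y, A p q := by
      rw [hexpand x y]
      calc ∑ a, ∑ b, A a b * x a * y b
          = ∑ a, (if a ∈ X then ∑ b, A a b * y b else 0) := by
            apply Finset.sum_congr rfl
            intro a _
            by_cases h : a ∈ X
            · rw [if_pos h]
              apply Finset.sum_congr rfl
              intro b _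
              rw [hx]
              simp [h]
            · rw [if_neg h]
              apply Finset.sum_eq_zero
              intro b _
              rw [hx]
              simp [h]
        _ = ∑ a ∈ X, ∑ b, A a b * y b := by
            rw [Finset.sum_ite_mem, Finset.univ_inter]
        _ = ∑ p ∈ X, ∑ q ∈ Y, A p q := by
            apply Finset.sum_congr rfl
            intro p _
            calc ∑ b, A p b * y b = ∑ b, (if b ∈ Y then A p b else 0) := by
                  apply Finset.sum_congr rfl
                  intro b _
                  by_cases h : b ∈ Y
                  · rw [if_pos h, hy]
                    simp [h]
                  · rw [if_neg h, hy]
                    simp [h]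
              _ = ∑ q ∈ Y, A p q := by
                  rw [Finset.sum_ite_mem, Finset.univ_inter]
    have hdot : (eXY G X Y : ℝ) = ∑ a, x a * (A *ᵥ y) a :=
      (eXY_eq_sum G A hA01 X Y).trans hstep.symm
    have hbil := bilin_le hV hHerm hΛle x y
    rw [hx2, hy2] at hbil
    have hXc : (0:ℝ) < (X.card : ℝ) := by exact_mod_cast hX.card_pos
    have hYc : (0:ℝ) < (Y.card : ℝ) := by exact_mod_cast hY.card_pos
    have hpos : (0:ℝ) < Real.sqrt ((X.card : ℝ) * (Y.card : ℝ)) :=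
      Real.sqrt_pos.2 (by positivity)
    rw [div_le_iff₀ hpos]
    calc (eXY G X Y : ℝ) = ∑ a, x a * (A *ᵥ y) a := hdot
      _ ≤ lamMax G * Real.sqrt (X.card : ℝ) * Real.sqrt (Y.card : ℝ) := hbil
      _ = lamMax G * Real.sqrt ((X.card : ℝ) * (Y.card : ℝ)) := by
          rw [Real.sqrt_mul hXc.le]
          ring
  exact ⟨hlower, hupper⟩
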